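/- For all ψ, ψ₀ > 0 and τ, τ₀ > 1, the first-order Taylor lower bound holds: (1/τ)·ln(1+1/ψ) ≥ A + B·ψ + C·τ, where A = 2 ln(1+1/ψ₀)/τ₀ + 1/((ψ₀+1)τ₀), B = −1/(ψ₀(ψ₀+1)τ₀), and C = −ln(1+1/ψ₀)/τ₀², with equality when (ψ,τ) = (ψ₀,τ₀). -/

import Mathlib

open Real

private lemma aux_g_mono : Monotone (fun x : ℝ => (1+x)*Real.exp (-x) - (1-x)*Real.exp x) := by
  have hd : ∀ x : ℝ, HasDerivAt (fun x : ℝ => (1+x)*Real.exp (-x) - (1-x)*Real.exp x)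
      (x * (Real.exp x - Real.exp (-x))) x := by
    intro x
    have h1 : HasDerivAt (fun x : ℝ => 1+x) 1 x := by
      simpa using (hasDerivAt_id x).const_add 1
    have h2 : HasDerivAt (fun x : ℝ => Real.exp (-x)) (Real.exp (-x) * (-1)) x := by
      exact ((hasDerivAt_id x).neg).exp
    have h3 : HasDerivAt (fun x : ℝ => 1-x) (-1) x := by
      exact (hasDerivAt_id x).const_sub 1
    have h4 : HasDerivAt Real.exp (Real.exp x) x := Real.hasDerivAt_exp x
    have := (h1.mul h2).sub (h3.mul h4)
    exact this.congr_deriv (by ring)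
  apply monotone_of_deriv_nonneg
  · intro x; exact (hd x).differentiableAt
  · intro x
    rw [(hd x).deriv]
    rcases le_total 0 x with hx | hx
    · exact mul_nonneg hx (by simp [Real.exp_le_exp]; linarith)
    · have : Real.exp x - Real.exp (-x) ≤ 0 := by simp [Real.exp_le_exp]; linarith
      nlinarith [mul_nonneg (neg_nonneg.mpr hx) (neg_nonneg.mpr this)]

private lemma log_ge_pade {u : ℝ} (hu : 1 ≤ u) : 2*(u-1)/(u+1) ≤ Real.log u := by
  set z := Real.log u / 2 with hz
  have hu0 : 0 < u := by linarith
  have hz0 : 0 ≤ z := by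
    have := Real.log_nonneg hu
    rw [hz]; linarith
  have hexp : Real.exp (2*z) = u := by
    rw [hz]; rw [show 2*(Real.log u/2) = Real.log u by ring, Real.exp_log hu0]
  have hg := aux_g_mono hz0
  simp only [Real.exp_zero] at hg
  have hkey : (1-z)*Real.exp z ≤ (1+z)*Real.exp (-z) := by
    simp at hg; linarith
  have hkey2 : (1-z)*u ≤ 1+z := by
    have hmul := mul_le_mul_of_nonneg_right hkey (Real.exp_pos z).le
    have e1 : (1+z)*Real.exp (-z) * Real.exp z = 1+z := by
      rw [mul_assoc, ← Real.exp_add]; simp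
    have e2 : (1-z)*Real.exp z * Real.exp z = (1-z)*u := by
      rw [mul_assoc, ← Real.exp_add, show z+z = 2*z by ring, hexp]
    rw [e1, e2] at hmul; exact hmul
  rw [div_le_iff₀ (by linarith : (0:ℝ) < u+1)]
  have hlz : Real.log u = 2*z := by rw [hz]; ring
  rw [hlz]; nlinarith

private lemma log_ge_sinh {u : ℝ} (hu0 : 0 < u) (hu : u ≤ 1) : (u - 1/u)/2 ≤ Real.log u := by
  have hv0 : 0 < u⁻¹ := by positivity
  have hv1 : 1 ≤ u⁻¹ := (one_le_inv_iff₀).mpr ⟨hu0, hu⟩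
  have hsl : Real.log u⁻¹ ≤ Real.sinh (Real.log u⁻¹) := by
    rcases eq_or_lt_of_le (Real.log_nonneg hv1) with h | h
    · rw [← h]; simp
    · exact (Real.self_lt_sinh_iff.mpr h).le
  rw [Real.sinh_log hv0, Real.log_inv, inv_inv] at hsl
  rw [one_div]
  linarith

set_option maxHeartbeats 1600000 in
/-- First-order Taylor lower bound of f(ψ,τ) = (1/τ)·ln(1+1/ψ) at (ψ₀,τ₀),
with equality at the expansion point. -/
theorem rate_tangent_bound (ψ ψ₀ τ τ₀ : ℝ) (hψ : 0 < ψ) (hψ₀ : 0 < ψ₀)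
    (hτ : 1 < τ) (hτ₀ : 1 < τ₀) :
    (1 / τ) * Real.log (1 + 1 / ψ) ≥
      (2 * Real.log (1 + 1 / ψ₀) / τ₀ + 1 / ((ψ₀ + 1) * τ₀))
        + (-(1 / (ψ₀ * (ψ₀ + 1) * τ₀))) * ψ
        + (-(Real.log (1 + 1 / ψ₀) / τ₀ ^ 2)) * τ ∧
    (1 / τ₀) * Real.log (1 + 1 / ψ₀) =
      (2 * Real.log (1 + 1 / ψ₀) / τ₀ + 1 / ((ψ₀ + 1) * τ₀))
        + (-(1 / (ψ₀ * (ψ₀ + 1) * τ₀))) * ψ₀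
        + (-(Real.log (1 + 1 / ψ₀) / τ₀ ^ 2)) * τ₀ := by
  have hψ1 : (0:ℝ) < ψ + 1 := by linarith
  have hψ₀1 : (0:ℝ) < ψ₀ + 1 := by linarith
  have hτ0 : (0:ℝ) < τ := by linarith
  have hτ₀0 : (0:ℝ) < τ₀ := by linarith
  set L := Real.log (1 + 1/ψ) with hLdef
  set L₀ := Real.log (1 + 1/ψ₀) with hL₀def
  have hLpos : 0 < L := Real.log_pos (by nlinarith [one_div_pos.mpr hψ])
  have hL₀pos : 0 < L₀ := Real.log_pos (by nlinarith [one_div_pos.mpr hψ₀])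
  -- basic log bounds
  have h2 : 1 ≤ L * (ψ+1) := by
    have h := Real.log_le_sub_one_of_pos (show (0:ℝ) < (1+1/ψ)⁻¹ by positivity)
    rw [Real.log_inv, ← hLdef] at h
    have hval : (1+1/ψ)⁻¹ = ψ/(ψ+1) := by field_simp
    rw [hval] at h
    have h' : 1 - ψ/(ψ+1) ≤ L := by linarith
    have := mul_le_mul_of_nonneg_right h' hψ1.le
    have heq : (1 - ψ/(ψ+1))*(ψ+1) = 1 := by field_simp; ring
    linarith [heq ▸ this]
  have h1 : 1 ≤ L₀ * (ψ₀+1) := by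
    have h := Real.log_le_sub_one_of_pos (show (0:ℝ) < (1+1/ψ₀)⁻¹ by positivity)
    rw [Real.log_inv, ← hL₀def] at h
    have hval : (1+1/ψ₀)⁻¹ = ψ₀/(ψ₀+1) := by field_simp
    rw [hval] at h
    have h' : 1 - ψ₀/(ψ₀+1) ≤ L₀ := by linarith
    have := mul_le_mul_of_nonneg_right h' hψ₀1.le
    have heq : (1 - ψ₀/(ψ₀+1))*(ψ₀+1) = 1 := by field_simp; ring
    linarith [heq ▸ this]
  have h3 : L₀ * ψ₀ ≤ 1 := by
    have h := Real.log_le_sub_one_of_pos (show (0:ℝ) < 1+1/ψ₀ by positivity)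
    rw [← hL₀def] at h
    have h' : L₀ ≤ 1/ψ₀ := by linarith
    have := mul_le_mul_of_nonneg_right h' hψ₀.le
    calc L₀ * ψ₀ ≤ (1/ψ₀) * ψ₀ := this
      _ = 1 := by field_simp
  -- log difference as a single log
  have hLd : L - L₀ = Real.log (ψ₀*(ψ+1)/(ψ*(ψ₀+1))) := by
    rw [hLdef, hL₀def, show (1:ℝ)+1/ψ = (ψ+1)/ψ by field_simp,
      show (1:ℝ)+1/ψ₀ = (ψ₀+1)/ψ₀ by field_simp,
      Real.log_div hψ1.ne' hψ.ne', Real.log_div hψ₀1.ne' hψ₀.ne',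
      Real.log_div (by positivity) (by positivity),
      Real.log_mul hψ₀.ne' hψ1.ne', Real.log_mul hψ.ne' hψ₀1.ne']
    ring
  have hS : (0:ℝ) < 2*ψ*ψ₀+ψ+ψ₀ := by positivity
  -- Step A : tangent bound for sqrt of log
  have hsA : 2*L₀*(ψ₀*(ψ₀+1)) - (ψ - ψ₀) ≤ 2*Real.sqrt L₀*Real.sqrt L*(ψ₀*(ψ₀+1)) := by
    have hsqrtnn : 0 ≤ 2*Real.sqrt L₀*Real.sqrt L*(ψ₀*(ψ₀+1)) := by positivity
    rcases le_total (2*L₀*(ψ₀*(ψ₀+1)) - (ψ - ψ₀)) 0 with hc | hc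
    · linarith
    · have hsq : (2*L₀*(ψ₀*(ψ₀+1)) - (ψ - ψ₀))^2 ≤ (2*Real.sqrt L₀*Real.sqrt L*(ψ₀*(ψ₀+1)))^2 := by
        have hrs : (2*Real.sqrt L₀*Real.sqrt L*(ψ₀*(ψ₀+1)))^2 = 4*L₀*L*(ψ₀*(ψ₀+1))^2 := by
          rw [mul_pow, mul_pow, mul_pow, Real.sq_sqrt hL₀pos.le, Real.sq_sqrt hLpos.le]; ring
        rw [hrs]
        rcases le_total ψ ψ₀ with hord | hord
        · -- ψ ≤ ψ₀ : Padé bound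
          have hu1 : 1 ≤ ψ₀*(ψ+1)/(ψ*(ψ₀+1)) := by
            rw [le_div_iff₀ (by positivity)]; nlinarith
          have hp := log_ge_pade hu1
          rw [← hLd] at hp
          have heq : 2*(ψ₀*(ψ+1)/(ψ*(ψ₀+1)) - 1)/(ψ₀*(ψ+1)/(ψ*(ψ₀+1)) + 1)
              = 2*(ψ₀-ψ)/(2*ψ*ψ₀+ψ+ψ₀) := by
            rw [div_eq_div_iff (by positivity) hS.ne']
            field_simp
            ring
          rw [heq, div_le_iff₀ hS] at hp
          have hPade : 2*(ψ₀-ψ) ≤ (2*ψ*ψ₀+ψ+ψ₀)*(L-L₀) := by linarith [hp]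
          have F1 : 4*L₀*(ψ₀*(ψ₀+1))^2*(2*(ψ₀-ψ))
              ≤ 4*L₀*(ψ₀*(ψ₀+1))^2*((2*ψ*ψ₀+ψ+ψ₀)*(L-L₀)) :=
            mul_le_mul_of_nonneg_left hPade (by positivity)
          have F2 : 0 ≤ (ψ₀-ψ)^2*(4*L₀*(ψ₀*(ψ₀+1))*(2*ψ₀+1) - (2*ψ*ψ₀+ψ+ψ₀)) := by
            apply mul_nonneg (sq_nonneg _)
            nlinarith [mul_le_mul_of_nonneg_right h1 hψ₀.le, hord, hψ, hψ₀]
          have hSG : 0 ≤ (2*ψ*ψ₀+ψ+ψ₀)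
              * (4*L₀*L*(ψ₀*(ψ₀+1))^2 - (2*L₀*(ψ₀*(ψ₀+1)) - (ψ-ψ₀))^2) := by
            nlinarith [F1, F2]
          have := (mul_nonneg_iff_of_pos_left hS).mp hSG
          linarith
        · -- ψ₀ ≤ ψ
          have hu0 : 0 < ψ₀*(ψ+1)/(ψ*(ψ₀+1)) := by positivity
          have hu1 : ψ₀*(ψ+1)/(ψ*(ψ₀+1)) ≤ 1 := by
            rw [div_le_one (by positivity)]; nlinarith
          have hp := log_ge_sinh hu0 hu1
          rw [← hLd] at hp
          have hW : (0:ℝ) < 2*(ψ*ψ₀*(ψ+1)*(ψ₀+1)) := by positivity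
          have heq : (ψ₀*(ψ+1)/(ψ*(ψ₀+1)) - 1/(ψ₀*(ψ+1)/(ψ*(ψ₀+1))))/2
              = (ψ₀-ψ)*(2*ψ*ψ₀+ψ+ψ₀)/(2*(ψ*ψ₀*(ψ+1)*(ψ₀+1))) := by
            rw [div_eq_div_iff (by norm_num) hW.ne']
            field_simp
            ring
          rw [heq, div_le_iff₀ hW] at hp
          have hsinh : (ψ₀-ψ)*(2*ψ*ψ₀+ψ+ψ₀) ≤ 2*(ψ*ψ₀*(ψ+1)*(ψ₀+1))*(L-L₀) := by
            linarith [hp]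
          rcases le_total ψ (2*L₀*(ψ₀*(ψ₀+1))) with hhead | htail
          · -- head: sinh certificate
            have F1 : 4*L₀*(ψ₀*(ψ₀+1))^2*((ψ₀-ψ)*(2*ψ*ψ₀+ψ+ψ₀))
                ≤ 4*L₀*(ψ₀*(ψ₀+1))^2*(2*(ψ*ψ₀*(ψ+1)*(ψ₀+1))*(L-L₀)) :=
              mul_le_mul_of_nonneg_left hsinh (by positivity)
            have F2 : 0 ≤ (ψ-ψ₀)^2*(ψ₀*(ψ₀+1))*(4*L₀*(ψ₀*(ψ₀+1))*(2*ψ+1) - 2*ψ*(ψ+1)) := by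
              apply mul_nonneg (by positivity)
              nlinarith [mul_le_mul_of_nonneg_right hhead (by linarith : (0:ℝ) ≤ 2*ψ+1), hψ]
            have hWG : 0 ≤ 2*(ψ*ψ₀*(ψ+1)*(ψ₀+1))
                * (4*L₀*L*(ψ₀*(ψ₀+1))^2 - (2*L₀*(ψ₀*(ψ₀+1)) - (ψ-ψ₀))^2) := by
              nlinarith [F1, F2]
            have := (mul_nonneg_iff_of_pos_left hW).mp hWG
            linarith
          · -- tail
            have hK2 : 2*L₀*(ψ₀*(ψ₀+1)) ≤ 2*(ψ₀+1) := by
              nlinarith [mul_le_mul_of_nonneg_right h3 hψ₀1.le]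
            have hKa : 2*L₀*(ψ₀*(ψ₀+1)) - (ψ-ψ₀) ≤ ψ₀ := by linarith
            have g1 : ψ+1 ≤ 3*(ψ₀+1) := by linarith
            have g2 : 1 ≤ L*(3*(ψ₀+1)) :=
              le_trans h2 (by nlinarith [hLpos, g1])
            have g3 : 1*1 ≤ (L₀*(ψ₀+1))*(L*(3*(ψ₀+1))) :=
              mul_le_mul h1 g2 zero_le_one (by positivity)
            nlinarith [g3, hc, hKa, sq_nonneg ψ₀, hψ₀]
      nlinarith [hsq, hsqrtnn, hc]
  -- Step B : quadratic-over-linear tangent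
  have hsB : 2*(Real.sqrt L₀*Real.sqrt L)*(τ*τ₀) ≤ L*τ₀^2 + L₀*τ^2 := by
    nlinarith [sq_nonneg (Real.sqrt L*τ₀ - Real.sqrt L₀*τ), Real.sq_sqrt hL₀pos.le,
      Real.sq_sqrt hLpos.le]
  -- combined key polynomial inequality
  have hKEY : τ*τ₀*(2*L₀*(ψ₀*(ψ₀+1)) - (ψ - ψ₀)) ≤ (ψ₀*(ψ₀+1))*(L*τ₀^2 + L₀*τ^2) := by
    have f1 := mul_le_mul_of_nonneg_left hsA (by positivity : (0:ℝ) ≤ τ*τ₀)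
    have f2 := mul_le_mul_of_nonneg_left hsB (by positivity : (0:ℝ) ≤ ψ₀*(ψ₀+1))
    nlinarith [f1, f2]
  constructor
  · rw [ge_iff_le, ← sub_nonneg]
    have hexp : (1/τ)*L - ((2*L₀/τ₀ + 1/((ψ₀+1)*τ₀)) + (-(1/(ψ₀*(ψ₀+1)*τ₀)))*ψ + (-(L₀/τ₀^2))*τ)
        = ((ψ₀*(ψ₀+1))*(L*τ₀^2 + L₀*τ^2) - τ*τ₀*(2*L₀*(ψ₀*(ψ₀+1)) - (ψ - ψ₀)))
          / (τ*τ₀^2*(ψ₀*(ψ₀+1))) := by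
      field_simp
      ring
    rw [hexp]
    apply div_nonneg (by linarith [hKEY]) (by positivity)
  · field_simp
    ring
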